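/- Let G be an inseparable topological group with a compatible left-invariant metric d. Then there exists ε > 0 (depending only on G) such that for every countably syndetic symmetric set W ⊆ G, the product set W·W contains an element u with d(1, u) > ε. -/

import Mathlib

open Pointwise

/-- In an inseparable metric space there is an `ε > 0` admitting an uncountable
`ε`-separated set. -/
lemma exists_uncountable_separated_of_not_separable
    {G : Type*} [MetricSpace G]
    (hinsep : ¬ TopologicalSpace.SeparableSpace G) :
    ∃ ε > (0 : ℝ), ∃ V : Set G, ¬ V.Countable ∧
      ∀ x ∈ V, ∀ y ∈ V, x ≠ y → ε ≤ dist x y := by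
  by_contra h
  push_neg at h
  -- h : ∀ ε > 0, ∀ V, ¬ V.Countable → ∃ x ∈ V, ∃ y ∈ V, x ≠ y ∧ dist x y < ε
  apply hinsep
  -- For each n, obtain a maximal (1/(n+1))-separated set via Zorn.
  have key : ∀ n : ℕ, ∃ S : Set G, S.Countable ∧
      ∀ x : G, ∃ y ∈ S, dist x y < 1 / (n + 1) := by
    intro n
    have hδ : (0 : ℝ) < 1 / (n + 1) := by positivity
    set δ : ℝ := 1 / (n + 1) with hδdef
    set 𝒮 : Set (Set G) := {S | ∀ x ∈ S, ∀ y ∈ S, x ≠ y → δ ≤ dist x y} with h𝒮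
    obtain ⟨M, hM, hMmax⟩ := zorn_subset 𝒮 (by
      intro c hc hchain
      refine ⟨⋃₀ c, ?_, fun s hs => Set.subset_sUnion_of_mem hs⟩
      intro x hx y hy hxy
      obtain ⟨s, hs, hxs⟩ := hx
      obtain ⟨t, ht, hyt⟩ := hy
      rcases hchain.total hs ht with hst | hts
      · exact hc ht x (hst hxs) y hyt hxy
      · exact hc hs x hxs y (hts hyt) hxy)
    refine ⟨M, ?_, ?_⟩
    · by_contra hMc
      obtain ⟨x, hx, y, hy, hxy, hd⟩ := h δ hδ M hMc
      exact absurd (hM x hx y hy hxy) (not_le.mpr hd)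
    · intro x
      by_cases hxM : x ∈ M
      · exact ⟨x, hxM, by simpa using hδ⟩
      · by_contra hno
        push_neg at hno
        have hins : insert x M ∈ 𝒮 := by
          intro a ha b hb hab
          rcases ha with rfl | ha
          · rcases hb with rfl | hb
            · exact absurd rfl hab
            · exact hno b hb
          · rcases hb with rfl | hb
            · rw [dist_comm]; exact hno a ha
            · exact hM a ha b hb hab
        exact hxM (hMmax hins (Set.subset_insert x M) (Set.mem_insert x M))
  choose S hScount hSdense using key
  refine ⟨⟨⋃ n, S n, Set.countable_iUnion hScount, ?_⟩⟩
  rw [Metric.dense_iff]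
  intro x r hr
  obtain ⟨n, hn⟩ := exists_nat_one_div_lt hr
  obtain ⟨y, hy, hyd⟩ := hSdense n x
  exact ⟨y, Metric.mem_ball'.mpr (lt_trans hyd hn), Set.mem_iUnion.mpr ⟨n, hy⟩⟩

/-- Let `G` be an inseparable topological group with a compatible
left-invariant metric. Then there exists `ε > 0` (depending only on `G`) such that for
every countably syndetic symmetric set `W ⊆ G`, the set `W·W` contains an element `u`
with `d(1, u) > ε`. -/
theorem inseparable_group_countably_syndetic_square_large_element
    {G : Type*} [Group G] [MetricSpace G] [IsTopologicalGroup G]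
    (hleft : ∀ g h k : G, dist (g * h) (g * k) = dist h k)
    (hinsep : ¬ TopologicalSpace.SeparableSpace G) :
    ∃ ε > (0 : ℝ), ∀ W : Set G, W = W⁻¹ →
      (∃ g : ℕ → G, ∀ x : G, ∃ n : ℕ, x ∈ g n • W) →
      ∃ u ∈ W * W, ε < dist (1 : G) u := by
  obtain ⟨ε, hε, V, hVunc, hVsep⟩ :=
    exists_uncountable_separated_of_not_separable hinsep
  refine ⟨ε / 2, by linarith, ?_⟩
  intro W hWsymm ⟨g, hg⟩
  -- V is covered by the countably many translates; one translate contains two points.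
  have hcover : V = ⋃ n, V ∩ g n • W := by
    ext x
    simp only [Set.mem_iUnion, Set.mem_inter_iff]
    constructor
    · intro hx
      obtain ⟨n, hn⟩ := hg x
      exact ⟨n, hx, hn⟩
    · rintro ⟨n, hx, -⟩; exact hx
  have : ∃ m : ℕ, ¬ (V ∩ g m • W).Countable := by
    by_contra hall
    push_neg at hall
    exact hVunc (hcover ▸ Set.countable_iUnion hall)
  obtain ⟨m, hm⟩ := this
  have hnt : (V ∩ g m • W).Nontrivial := by
    rw [← Set.not_subsingleton_iff]
    exact fun hs => hm hs.countable
  obtain ⟨u, hu, v, hv, huv⟩ := hnt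
  obtain ⟨w₁, hw₁, hw₁e⟩ := hu.2
  obtain ⟨w₂, hw₂, hw₂e⟩ := hv.2
  refine ⟨u⁻¹ * v, ?_, ?_⟩
  · have hw₁' : w₁⁻¹ ∈ W := by
      rw [hWsymm] at hw₁
      exact Set.inv_mem_inv.mp (by simpa using hw₁)
    have : u⁻¹ * v = w₁⁻¹ * w₂ := by
      simp only [smul_eq_mul] at hw₁e hw₂e
      subst hw₁e hw₂e
      group
    rw [this]
    exact Set.mul_mem_mul hw₁' hw₂
  · have : dist (1 : G) (u⁻¹ * v) = dist u v := by
      have := hleft u 1 (u⁻¹ * v)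
      simpa [mul_assoc] using this.symm
    rw [this]
    have := hVsep u hu.1 v hv.1 huv
    linarith
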